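/- Let H₁, H₂ be positive semidefinite operators on a finite-dimensional complex Hilbert space with nonempty null spaces L₁ and L₂, let v be the minimum of the smallest nonzero eigenvalues of H₁ and H₂, and let cos²θ = max over unit vectors η ∈ L₂ of ⟨η|P_{L₁}|η⟩ < 1, where P_{L₁} is the orthogonal projection onto L₁. Then H₁ + H₂ ≥ 2v·sin²(θ/2) (as operators). -/

import Mathlib

open scoped InnerProductSpace

section Aux

variable {E : Type*} [NormedAddCommGroup E] [InnerProductSpace ℂ E] [FiniteDimensional ℂ E]



lemma eig_mem_spectrum (H : E →L[ℂ] E) (μ : ℂ) (y : E) (hy : y ≠ 0) (hHy : H y = μ • y) :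
    μ ∈ spectrum ℂ H := by
  rw [spectrum.mem_iff]
  intro hunit
  obtain ⟨u, hu⟩ := hunit
  apply hy
  have h0 : (algebraMap ℂ (E →L[ℂ] E) μ - H) y = 0 := by
    simp [ContinuousLinearMap.sub_apply, Algebra.algebraMap_eq_smul_one, hHy]
  calc y = ((↑u⁻¹ * ↑u : E →L[ℂ] E)) y := by rw [Units.inv_mul]; rfl
    _ = (↑u⁻¹ : E →L[ℂ] E) ((↑u : E →L[ℂ] E) y) := rfl
    _ = 0 := by rw [hu, h0]; simp

lemma key_spectral (H : E →L[ℂ] E) (hH : H.IsPositive) (v : ℝ) (hv0 : 0 ≤ v)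
    (hv : ∀ μ ∈ spectrum ℂ H, μ ≠ 0 → v ≤ μ.re) (x : E) :
    v * ‖x - (Submodule.orthogonalProjectionOnto (LinearMap.ker (H : E →ₗ[ℂ] E)) x : E)‖ ^ 2 ≤ H.reApplyInnerSelf x := by
  have hsym : (H : E →ₗ[ℂ] E).IsSymmetric :=
    hH.1
  set n := Module.finrank ℂ E with hn'
  have hn : Module.finrank ℂ E = n := rfl
  set b := hsym.eigenvectorBasis hn with hb
  set μ := hsym.eigenvalues hn with hμ
  -- eigenvalue lower bound
  have hμv : ∀ i, μ i ≠ 0 → v ≤ μ i := by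
    intro i hne
    have hev := hsym.apply_eigenvectorBasis hn i
    have hmem : ((μ i : ℂ)) ∈ spectrum ℂ H :=
      eig_mem_spectrum H _ (b i) (fun h => b.toBasis.ne_zero i (by simpa using h)) hev
    have := hv _ hmem (by exact_mod_cast hne)
    simpa using this
  set c : EuclideanSpace ℂ (Fin n) := b.repr x with hc
  set f : EuclideanSpace ℂ (Fin n) := WithLp.toLp 2 (fun i => if μ i = 0 then c i else 0) with hf
  set y : E := b.repr.symm f with hy
  have hyk : y ∈ LinearMap.ker (H : E →ₗ[ℂ] E) := by
    rw [LinearMap.mem_ker]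
    have : b.repr (H y) = 0 := by
      ext i
      have := hsym.eigenvectorBasis_apply_self_apply hn y i
      rw [show ((H : E →ₗ[ℂ] E) y) = H y from rfl] at this
      rw [this]
      have : b.repr y i = f i := by rw [hy]; simp
      rw [this, hf]
      by_cases h : μ i = 0
      · simp [show hsym.eigenvalues hn i = 0 from h]
      · simp [h]
    simpa using congrArg b.repr.symm this
  -- distance bound
  have hmin : ‖x - (Submodule.orthogonalProjectionOnto (LinearMap.ker (H : E →ₗ[ℂ] E)) x : E)‖ ≤ ‖x - y‖ := by
    rw [← Submodule.starProjection_apply, Submodule.starProjection_minimal]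
    exact ciInf_le ⟨0, fun z hz => by obtain ⟨w, rfl⟩ := hz; positivity⟩ (⟨y, hyk⟩ : LinearMap.ker (H : E →ₗ[ℂ] E))
  have hxy : ‖x - y‖ ^ 2 = ∑ i, if μ i = 0 then 0 else ‖c i‖ ^ 2 := by
    have : ‖x - y‖ = ‖b.repr x - b.repr y‖ := by
      rw [← map_sub]; exact (b.repr.norm_map _).symm
    rw [this]
    rw [show b.repr y = f by simp [hy]]
    rw [EuclideanSpace.norm_eq]
    rw [Real.sq_sqrt (by positivity)]
    apply Finset.sum_congr rfl
    intro i _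
    by_cases h : μ i = 0 <;> simp [hf, h, sub_eq_zero, norm_sub_rev, hc]
  -- inner product
  have hinner : H.reApplyInnerSelf x = ∑ i, μ i * ‖c i‖ ^ 2 := by
    rw [ContinuousLinearMap.reApplyInnerSelf]
    rw [← b.repr.inner_map_map (H x) x]
    rw [PiLp.inner_apply]
    rw [map_sum]
    apply Finset.sum_congr rfl
    intro i _
    have hrep : b.repr (H x) i = μ i * c i := by
      have := hsym.eigenvectorBasis_apply_self_apply hn x i
      rw [show ((H : E →ₗ[ℂ] E) x) = H x from rfl] at this
      simpa [hc] using this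
    rw [hrep]
    simp [RCLike.inner_apply, map_mul, Complex.conj_ofReal]
    ring_nf
    rw [Complex.sq_norm, Complex.normSq_apply]
    ring
  rw [hinner]
  calc v * ‖x - (Submodule.orthogonalProjectionOnto (LinearMap.ker (H : E →ₗ[ℂ] E)) x : E)‖ ^ 2
      ≤ v * ‖x - y‖ ^ 2 :=
        mul_le_mul_of_nonneg_left (pow_le_pow_left₀ (norm_nonneg _) hmin 2) hv0
    _ = ∑ i, v * (if μ i = 0 then 0 else ‖c i‖ ^ 2) := by rw [hxy, Finset.mul_sum]
    _ ≤ ∑ i, μ i * ‖c i‖ ^ 2 := by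
        apply Finset.sum_le_sum
        intro i _
        by_cases h : μ i = 0
        · simp [h]
        · simp only [h, if_false]
          exact mul_le_mul_of_nonneg_right (hμv i h) (by positivity)



lemma proj_pyth (K : Submodule ℂ E) (x : E) :
    ‖x‖ ^ 2 = ‖(Submodule.orthogonalProjectionOnto K x : E)‖ ^ 2 + ‖x - Submodule.orthogonalProjectionOnto K x‖ ^ 2 := by
  set p := (Submodule.orthogonalProjectionOnto K x : E) with hp
  have h0 : ⟪p, x - p⟫_ℂ = 0 :=
    Submodule.inner_right_of_mem_orthogonal (Submodule.orthogonalProjectionOnto K x).2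
      (by have := K.sub_starProjection_mem_orthogonal x; rwa [Submodule.starProjection_apply] at this)
  have hx : x = p + (x - p) := by abel
  calc ‖x‖ ^ 2 = ‖p + (x - p)‖ ^ 2 := by rw [← hx]
    _ = ‖p‖ ^ 2 + 2 * RCLike.re ⟪p, x - p⟫_ℂ + ‖x - p‖ ^ 2 := norm_add_sq (𝕜 := ℂ) _ _
    _ = ‖p‖ ^ 2 + ‖x - p‖ ^ 2 := by rw [h0]; simp

lemma proj_inner_self (K : Submodule ℂ E) (x : E) :
    (⟪(Submodule.orthogonalProjectionOnto K x : E), x⟫_ℂ).re = ‖(Submodule.orthogonalProjectionOnto K x : E)‖ ^ 2 := by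
  set p := (Submodule.orthogonalProjectionOnto K x : E) with hp
  have h0 : ⟪p, x - p⟫_ℂ = 0 :=
    Submodule.inner_right_of_mem_orthogonal (Submodule.orthogonalProjectionOnto K x).2
      (by have := K.sub_starProjection_mem_orthogonal x; rwa [Submodule.starProjection_apply] at this)
  have hx : x = p + (x - p) := by abel
  have : ⟪p, x⟫_ℂ = ⟪p, p⟫_ℂ := by
    conv_lhs => rw [hx]
    rw [inner_add_right, h0, add_zero]
  rw [this, inner_self_eq_norm_sq_to_K]
  simp [← Complex.ofReal_pow]


end Aux

set_option maxHeartbeats 1000000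
set_option synthInstance.maxHeartbeats 200000

/-- Kitaev's geometric lemma: if `H₁, H₂ ⪰ 0` have nonzero kernels `L₁, L₂`, `v > 0`
lower-bounds all nonzero eigenvalues of both, and
`max_{η ∈ L₂, ‖η‖ = 1} ‖P_{L₁} η‖² ≤ cos² θ` with `θ ∈ (0, π/2]`, then
`H₁ + H₂ ⪰ 2 v sin²(θ/2) · I`. -/
theorem geometric_lemma
    {E : Type*} [NormedAddCommGroup E] [InnerProductSpace ℂ E] [FiniteDimensional ℂ E]
    (H₁ H₂ : E →L[ℂ] E) (hH₁ : H₁.IsPositive) (hH₂ : H₂.IsPositive)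
    (hL₁ : LinearMap.ker (H₁ : E →ₗ[ℂ] E) ≠ ⊥) (hL₂ : LinearMap.ker (H₂ : E →ₗ[ℂ] E) ≠ ⊥)
    (v : ℝ) (hv : 0 < v)
    (hv₁ : ∀ μ ∈ spectrum ℂ H₁, μ ≠ 0 → v ≤ μ.re)
    (hv₂ : ∀ μ ∈ spectrum ℂ H₂, μ ≠ 0 → v ≤ μ.re)
    (θ : ℝ) (hθ : θ ∈ Set.Ioc 0 (Real.pi / 2))
    (hcos : ∀ η ∈ LinearMap.ker (H₂ : E →ₗ[ℂ] E), ‖η‖ = 1 →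
      ‖(Submodule.orthogonalProjectionOnto (LinearMap.ker (H₁ : E →ₗ[ℂ] E)) η : E)‖ ^ 2 ≤ Real.cos θ ^ 2) :
    (H₁ + H₂ - ((2 * v * Real.sin (θ / 2) ^ 2 : ℝ) : ℂ) • 1).IsPositive := by

  set c : ℝ := Real.cos θ with hcdef
  set k : ℝ := 2 * v * Real.sin (θ / 2) ^ 2 with hkdef
  have hc0 : 0 ≤ c := Real.cos_nonneg_of_mem_Icc
    ⟨by linarith [hθ.1, Real.pi_pos], hθ.2⟩
  have hc1 : c ≤ 1 := Real.cos_le_one θ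
  have hk : k = v * (1 - c) := by
    have : Real.sin (θ / 2) ^ 2 = 1 / 2 - Real.cos (2 * (θ / 2)) / 2 :=
      Real.sin_sq_eq_half_sub _
    rw [hkdef, this]
    rw [show 2 * (θ / 2) = θ by ring]
    ring
  constructor
  · rw [← ContinuousLinearMap.isSelfAdjoint_iff_isSymmetric, IsSelfAdjoint, star_sub, star_add,
      (ContinuousLinearMap.isSelfAdjoint_iff_isSymmetric.mpr hH₁.1).star_eq,
      (ContinuousLinearMap.isSelfAdjoint_iff_isSymmetric.mpr hH₂.1).star_eq, star_smul, star_one,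
      Complex.star_def, Complex.conj_ofReal]
  intro x
  -- projection norm bound on ker H₂
  have hP : ∀ w ∈ LinearMap.ker (H₂ : E →ₗ[ℂ] E),
      ‖(Submodule.orthogonalProjectionOnto (LinearMap.ker (H₁ : E →ₗ[ℂ] E)) w : E)‖ ≤ c * ‖w‖ := by
    intro w hw
    rcases eq_or_ne w 0 with rfl | hw0
    · simp
    · have hnw : ‖w‖ ≠ 0 := norm_ne_zero_iff.mpr hw0
      set η := (‖w‖⁻¹ : ℂ) • w with hη
      have hηk : η ∈ LinearMap.ker (H₂ : E →ₗ[ℂ] E) := Submodule.smul_mem _ _ hw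
      have hη1 : ‖η‖ = 1 := by
        rw [hη, norm_smul]
        simp [hnw]
      have := hcos η hηk hη1
      have hPη : (Submodule.orthogonalProjectionOnto (LinearMap.ker (H₁ : E →ₗ[ℂ] E)) η : E)
          = (‖w‖⁻¹ : ℂ) • (Submodule.orthogonalProjectionOnto (LinearMap.ker (H₁ : E →ₗ[ℂ] E)) w : E) := by
        rw [hη, map_smul]; rfl
      rw [hPη, norm_smul] at this
      have hnorm : (‖w‖⁻¹ * ‖(Submodule.orthogonalProjectionOnto (LinearMap.ker (H₁ : E →ₗ[ℂ] E)) w : E)‖) ^ 2 ≤ c ^ 2 := by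
        simpa [mul_pow] using this
      have h1 : ‖w‖⁻¹ * ‖(Submodule.orthogonalProjectionOnto (LinearMap.ker (H₁ : E →ₗ[ℂ] E)) w : E)‖ ≤ c := by
        nlinarith [norm_nonneg (Submodule.orthogonalProjectionOnto (LinearMap.ker (H₁ : E →ₗ[ℂ] E)) w : E),
          inv_nonneg.mpr (norm_nonneg w), hc0,
          mul_nonneg (inv_nonneg.mpr (norm_nonneg w))
            (norm_nonneg (Submodule.orthogonalProjectionOnto (LinearMap.ker (H₁ : E →ₗ[ℂ] E)) w : E))]
      calc ‖(Submodule.orthogonalProjectionOnto (LinearMap.ker (H₁ : E →ₗ[ℂ] E)) w : E)‖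
          = ‖w‖ * (‖w‖⁻¹ * ‖(Submodule.orthogonalProjectionOnto (LinearMap.ker (H₁ : E →ₗ[ℂ] E)) w : E)‖) := by
            field_simp
        _ ≤ ‖w‖ * c := by
            exact mul_le_mul_of_nonneg_left h1 (norm_nonneg w)
        _ = c * ‖w‖ := by ring
  set u : E := (Submodule.orthogonalProjectionOnto (LinearMap.ker (H₁ : E →ₗ[ℂ] E)) x : E) with hu
  set w : E := (Submodule.orthogonalProjectionOnto (LinearMap.ker (H₂ : E →ₗ[ℂ] E)) x : E) with hw
  set a := ‖u‖; set b := ‖w‖; set X := ‖x‖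
  -- inner bound
  have hiw : (⟪u, w⟫_ℂ).re ≤ c * (a * b) := by
    have huL : u ∈ LinearMap.ker (H₁ : E →ₗ[ℂ] E) := (Submodule.orthogonalProjectionOnto (LinearMap.ker (H₁ : E →ₗ[ℂ] E)) x).2
    have hproj : (Submodule.orthogonalProjectionOnto (LinearMap.ker (H₁ : E →ₗ[ℂ] E)) u : E) = u := by
      rw [hu, Submodule.orthogonalProjectionOnto_mem_subspace_eq_self]
    have h1 : ⟪u, w⟫_ℂ = ⟪u, (Submodule.orthogonalProjectionOnto (LinearMap.ker (H₁ : E →ₗ[ℂ] E)) w : E)⟫_ℂ := by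
      conv_lhs => rw [← hproj]
      have := Submodule.inner_starProjection_left_eq_right (LinearMap.ker (H₁ : E →ₗ[ℂ] E)) u w
      rwa [Submodule.starProjection_apply, Submodule.starProjection_apply] at this
    have h2 : ‖⟪u, (Submodule.orthogonalProjectionOnto (LinearMap.ker (H₁ : E →ₗ[ℂ] E)) w : E)⟫_ℂ‖
        ≤ a * (c * b) := by
      calc ‖⟪u, (Submodule.orthogonalProjectionOnto (LinearMap.ker (H₁ : E →ₗ[ℂ] E)) w : E)⟫_ℂ‖
          ≤ a * ‖(Submodule.orthogonalProjectionOnto (LinearMap.ker (H₁ : E →ₗ[ℂ] E)) w : E)‖ := norm_inner_le_norm _ _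
        _ ≤ a * (c * b) := mul_le_mul_of_nonneg_left
            (hP w (Submodule.orthogonalProjectionOnto (LinearMap.ker (H₂ : E →ₗ[ℂ] E)) x).2) (norm_nonneg u)
    calc (⟪u, w⟫_ℂ).re ≤ ‖⟪u, w⟫_ℂ‖ := Complex.re_le_norm _
      _ = ‖⟪u, (Submodule.orthogonalProjectionOnto (LinearMap.ker (H₁ : E →ₗ[ℂ] E)) w : E)⟫_ℂ‖ := by rw [h1]
      _ ≤ a * (c * b) := h2
      _ = c * (a * b) := by ring
  -- sum of squares bound  s = a² + b² ≤ (1+c) X²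
  have hs : a ^ 2 + b ^ 2 ≤ (1 + c) * X ^ 2 := by
    have huw : ‖u + w‖ ^ 2 ≤ (1 + c) * (a ^ 2 + b ^ 2) := by
      have hns := norm_add_sq (𝕜 := ℂ) u w
      rw [show ‖u‖ = a from rfl, show ‖w‖ = b from rfl] at hns
      rw [show RCLike.re ⟪u, w⟫_ℂ = (⟪u, w⟫_ℂ).re from rfl] at hns
      nlinarith [hiw, mul_nonneg hc0 (sq_nonneg (a - b))]
    have hsum : a ^ 2 + b ^ 2 = (⟪u + w, x⟫_ℂ).re := by
      rw [inner_add_left, Complex.add_re, proj_inner_self, proj_inner_self]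
    have hcs : (⟪u + w, x⟫_ℂ).re ≤ ‖u + w‖ * X := by
      calc (⟪u + w, x⟫_ℂ).re ≤ ‖⟪u + w, x⟫_ℂ‖ := Complex.re_le_norm _
        _ ≤ ‖u + w‖ * X := norm_inner_le_norm _ _
    have hs2 : (a ^ 2 + b ^ 2) ^ 2 ≤ (1 + c) * (a ^ 2 + b ^ 2) * X ^ 2 := by
      have h3 : (a ^ 2 + b ^ 2) ≤ ‖u + w‖ * X := hsum ▸ hcs
      nlinarith [norm_nonneg (u + w), norm_nonneg x, sq_nonneg a, sq_nonneg b]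
    rcases eq_or_lt_of_le (by positivity : (0:ℝ) ≤ a ^ 2 + b ^ 2) with h | h
    · rw [← h]; positivity
    · nlinarith
  -- spectral bounds
  have h1 := key_spectral H₁ hH₁ v hv.le hv₁ x
  have h2 := key_spectral H₂ hH₂ v hv.le hv₂ x
  have hpy1 := proj_pyth (LinearMap.ker (H₁ : E →ₗ[ℂ] E)) x
  have hpy2 := proj_pyth (LinearMap.ker (H₂ : E →ₗ[ℂ] E)) x
  -- final computation
  have hre : (H₁ + H₂ - ((k : ℝ) : ℂ) • 1).reApplyInnerSelf x
      = H₁.reApplyInnerSelf x + H₂.reApplyInnerSelf x - k * X ^ 2 := by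
    simp only [ContinuousLinearMap.reApplyInnerSelf, ContinuousLinearMap.sub_apply,
      ContinuousLinearMap.add_apply, ContinuousLinearMap.smul_apply,
      ContinuousLinearMap.one_apply, inner_sub_left, inner_add_left, inner_smul_left,
      Complex.sub_re, Complex.add_re]
    rw [inner_self_eq_norm_sq_to_K]
    simp [Complex.conj_ofReal, ← Complex.ofReal_pow, ← Complex.ofReal_mul]
    left; rfl
  rw [hre, hk]
  nlinarith [h1, h2, hpy1, hpy2, mul_nonneg hv.le (sub_nonneg.mpr hs)]
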